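/- Let R be a finite set of positive integers with r = max(R), let n ≥ r and s ≥ 2 be integers. The clock network N_n(R) is linearly s-solvable if and only if the r×r identity matrix over ℤ_s can be expressed as a product of exactly n R-atomic matrices over ℤ_s. -/

import Mathlib

/-- `M` is an `R`-circuit matrix of length `n` over `ℤ_s`: an `(n+r) × r` matrix whose
first `r` rows form `I_r`, and such that every row `k` with `r < k ≤ n+r` (1-indexed;
here 0-indexed `r ≤ k < n+r`) is a `ℤ_s`-linear combination of the rows with indices in
`{k - d : d ∈ R}`. -/
def IsCircuitMatrix (R : Finset ℕ) (r n s : ℕ)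
    (M : Matrix (Fin (n + r)) (Fin r) (ZMod s)) : Prop :=
  (∀ i j : Fin r, M ⟨(i : ℕ), by have := i.isLt; omega⟩ j
      = if i = j then (1 : ZMod s) else 0) ∧
  ∀ k : ℕ, r ≤ k → ∀ hk : k < n + r, ∃ lam : ℕ → ZMod s,
    ∀ j : Fin r, M ⟨k, hk⟩ j = ∑ d ∈ R, lam d * M ⟨k - d, by omega⟩ j

/-- The clock network `N_n(R)` is linearly `s`-solvable: there is an `R`-circuit matrix
of length `n` over `ℤ_s` whose last `r` rows also form `I_r`. -/
def LinearlySolvable (R : Finset ℕ) (r n s : ℕ) : Prop :=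
  ∃ M : Matrix (Fin (n + r)) (Fin r) (ZMod s),
    IsCircuitMatrix R r n s M ∧
    ∀ i j : Fin r, M ⟨n + (i : ℕ), by have := i.isLt; omega⟩ j
      = if i = j then (1 : ZMod s) else 0

/-- An `R`-atomic matrix over `ℤ_s`: an `r × r` matrix with entry `1` in positions
`(i, i+1)` for `1 ≤ i ≤ r-1` (1-indexed), zeros elsewhere in the first `r-1` rows, and
last row `(α_r, α_{r-1}, …, α_1)` where `α_j = 0` for every `j ∉ R`. -/
def IsAtomicMat (R : Finset ℕ) (r s : ℕ) (A : Matrix (Fin r) (Fin r) (ZMod s)) : Prop :=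
  ∀ i j : Fin r,
    ((i : ℕ) + 1 < r → A i j = if (j : ℕ) = (i : ℕ) + 1 then (1 : ZMod s) else 0) ∧
    ((i : ℕ) + 1 = r → r - (j : ℕ) ∉ R → A i j = 0)

/-- The clock network `N_n(R)` is linearly `s`-solvable if and only if the `r × r`
identity matrix over `ℤ_s` is a product of exactly `n` `R`-atomic matrices. -/
lemma finCongr' {α : Sort*} {N : ℕ} (f : Fin N → α) {a b : ℕ} (h : a = b)
    (ha : a < N) (hb : b < N) : f ⟨a, ha⟩ = f ⟨b, hb⟩ := by subst h; rfl

lemma sum_delta {s r : ℕ} (f : Fin r → ZMod s) (m : ℕ) (hm : m < r) :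
    ∑ l : Fin r, (if (l : ℕ) = m then (1 : ZMod s) else 0) * f l = f ⟨m, hm⟩ := by
  have h : ∀ l : Fin r, ((l : ℕ) = m) = (l = ⟨m, hm⟩) := fun l => by
    simp [Fin.ext_iff]
  simp only [h, ite_mul, one_mul, zero_mul]
  simp [Finset.sum_ite_eq']

lemma sum_reindex {s : ℕ} (r : ℕ) (R : Finset ℕ) (hmax : ∀ d ∈ R, d ≤ r)
    (hpos : ∀ d ∈ R, 0 < d) (G F : ℕ → ZMod s) :
    ∑ l ∈ Finset.range r, (if r - l ∈ R then G (r - l) else 0) * F l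
      = ∑ d ∈ R, G d * F (r - d) := by
  have h1 : ∀ l ∈ Finset.range r, (if r - l ∈ R then G (r - l) else 0) * F l
      = if r - l ∈ R then G (r - l) * F l else 0 := by intro l _; split <;> simp
  rw [Finset.sum_congr rfl h1, Finset.sum_ite, Finset.sum_const_zero, add_zero]
  refine Finset.sum_bij' (fun l _ => r - l) (fun d _ => r - d) ?_ ?_ ?_ ?_ ?_
  · intro a ha; simp only [Finset.mem_filter, Finset.mem_range] at ha; exact ha.2
  · intro d hd
    simp only [Finset.mem_filter, Finset.mem_range]
    have h1 := hmax d hd; have h2 := hpos d hd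
    constructor
    · omega
    · have : r - (r - d) = d := by omega
      rw [this]; exact hd
  · intro a ha; simp only [Finset.mem_filter, Finset.mem_range] at ha
    have := hmax _ ha.2; have := hpos _ ha.2
    show r - (r - a) = a
    omega
  · intro d hd; have := hmax d hd; have := hpos d hd
    show r - (r - d) = d
    omega
  · intro a ha; simp only [Finset.mem_filter, Finset.mem_range] at ha
    have h1 := hmax _ ha.2; have h2 := hpos _ ha.2
    have : r - (r - a) = a := by omega
    rw [this]

lemma prod_shift {r s : ℕ} (R : Finset ℕ) :
    ∀ (L : List (Matrix (Fin r) (Fin r) (ZMod s))), (∀ A ∈ L, IsAtomicMat R r s A) →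
    ∀ (B : Matrix (Fin r) (Fin r) (ZMod s)) (u : ℕ) (hu : u + L.length < r) (j : Fin r),
    (L.prod * B) ⟨u, by omega⟩ j = B ⟨u + L.length, hu⟩ j := by
  intro L
  induction L with
  | nil => intro _ B u hu j; simp
  | cons A T ih =>
    intro hL B u hu j
    have hA := hL A List.mem_cons_self
    simp only [List.length_cons] at hu ⊢
    have hu1 : u + 1 < r := by omega
    rw [List.prod_cons, Matrix.mul_assoc, Matrix.mul_apply]
    have hrow : ∀ l : Fin r, A ⟨u, by omega⟩ l = if (l : ℕ) = u + 1 then 1 else 0 :=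
      fun l => (hA ⟨u, by omega⟩ l).1 hu1
    rw [Finset.sum_congr rfl (fun l _ => by rw [hrow l])]
    rw [sum_delta (fun l => (T.prod * B) l j) (u + 1) hu1]
    rw [ih (fun X hX => hL X (List.mem_cons_of_mem _ hX)) B (u + 1) (by omega) j]
    exact finCongr' (fun i => B i j) (by omega) _ _

theorem linearlySolvable_iff_identity_prod_atomic (R : Finset ℕ) (r n s : ℕ)
    (hrR : r ∈ R) (hmax : ∀ j ∈ R, j ≤ r) (hpos : ∀ j ∈ R, 0 < j)
    (hn : r ≤ n) (hs : 2 ≤ s) :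
    LinearlySolvable R r n s ↔
      ∃ L : List (Matrix (Fin r) (Fin r) (ZMod s)),
        L.length = n ∧ (∀ A ∈ L, IsAtomicMat R r s A) ∧ L.prod = 1 := by
  have hr : 0 < r := hpos r hrR
  constructor
  · rintro ⟨M, ⟨hI, hC⟩, hLast⟩
    classical
    choose lam hlam using hC
    set lam' : ℕ → ℕ → ZMod s := fun k d =>
      if h : r ≤ k ∧ k < n + r then lam k h.1 h.2 d else 0 with hlam'def
    have hlam2 : ∀ (k : ℕ) (h1 : r ≤ k) (h2 : k < n + r) (j : Fin r),
        M ⟨k, h2⟩ j = ∑ d ∈ R, lam' k d * M ⟨k - d, by omega⟩ j := by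
      intro k h1 h2 j
      have e : ∀ d, lam' k d = lam k h1 h2 d := fun d => by
        simp only [hlam'def]; rw [dif_pos ⟨h1, h2⟩]
      rw [Finset.sum_congr rfl (fun d _ => by rw [e d])]
      exact hlam k h1 h2 j
    set A : ℕ → Matrix (Fin r) (Fin r) (ZMod s) := fun k =>
      Matrix.of fun i l =>
        if (i : ℕ) + 1 < r then (if (l : ℕ) = (i : ℕ) + 1 then 1 else 0)
        else if r - (l : ℕ) ∈ R then lam' (k + r) (r - (l : ℕ)) else 0 with hAdef
    have hAatom : ∀ k, IsAtomicMat R r s (A k) := by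
      intro k i j
      constructor
      · intro h; simp only [hAdef, Matrix.of_apply, if_pos h]
      · intro h1 h2
        simp only [hAdef, Matrix.of_apply]
        rw [if_neg (by omega), if_neg h2]
    have key : ∀ k, k ≤ n → ∀ (t j : Fin r) (ht : k + (t : ℕ) < n + r),
        (((List.range k).map A).reverse.prod) t j = M ⟨k + (t : ℕ), ht⟩ j := by
      intro k
      induction k with
      | zero =>
        intro _ t j ht
        simp only [List.range_zero, List.map_nil, List.reverse_nil, List.prod_nil]
        rw [Matrix.one_apply, ← hI t j]
        exact finCongr' (fun i => M i j) (by omega) _ _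
      | succ k ih =>
        intro hk t j ht
        simp only [List.range_succ, List.map_append, List.reverse_append, List.map_cons,
          List.map_nil, List.reverse_cons, List.reverse_nil, List.nil_append,
          List.singleton_append, List.prod_cons]
        rw [Matrix.mul_apply]
        by_cases hcase : (t : ℕ) + 1 < r
        · have hrow : ∀ l : Fin r, A k t l = if (l : ℕ) = (t : ℕ) + 1 then 1 else 0 := by
            intro l; simp only [hAdef, Matrix.of_apply, if_pos hcase]
          rw [Finset.sum_congr rfl (fun l _ => by rw [hrow l])]
          rw [sum_delta (fun l => (((List.range k).map A).reverse.prod) l j) _ hcase]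
          rw [ih (by omega) ⟨(t : ℕ) + 1, hcase⟩ j (by omega)]
          exact finCongr' (fun i => M i j)
            (show k + ((t : ℕ) + 1) = k + 1 + (t : ℕ) by omega) _ _
        · have hrow : ∀ l : Fin r,
              A k t l = if r - (l : ℕ) ∈ R then lam' (k + r) (r - (l : ℕ)) else 0 := by
            intro l; simp only [hAdef, Matrix.of_apply, if_neg hcase]
          have hMk : M ⟨k + 1 + (t : ℕ), ht⟩ j = M ⟨k + r, by omega⟩ j :=
            finCongr' (fun i => M i j) (by omega) _ _
          rw [hMk, hlam2 (k + r) (by omega) (by omega) j]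
          set F : ℕ → ZMod s := fun m =>
            if h : k + m < n + r then M ⟨k + m, h⟩ j else 0 with hF
          have hprev : ∀ l : Fin r,
              (((List.range k).map A).reverse.prod) l j = F (l : ℕ) := by
            intro l
            rw [ih (by omega) l j (by omega)]
            simp only [hF]
            rw [dif_pos (by omega)]
          rw [Finset.sum_congr rfl (fun l _ => by rw [hrow l, hprev l])]
          rw [show (∑ l : Fin r,
                (if r - (l : ℕ) ∈ R then lam' (k + r) (r - (l : ℕ)) else 0) * F (l : ℕ))
              = ∑ l ∈ Finset.range r, (if r - l ∈ R then lam' (k + r) (r - l) else 0) * F l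
            from Fin.sum_univ_eq_sum_range
              (fun l => (if r - l ∈ R then lam' (k + r) (r - l) else 0) * F l) r]
          rw [sum_reindex r R hmax hpos (lam' (k + r)) F]
          refine Finset.sum_congr rfl fun d hd => ?_
          have h1 := hmax d hd; have h2 := hpos d hd
          congr 1
          simp only [hF]
          rw [dif_pos (by omega)]
          exact finCongr' (fun i => M i j) (by omega) _ _
    refine ⟨((List.range n).map A).reverse, by simp, ?_, ?_⟩
    · intro B hB
      rw [List.mem_reverse, List.mem_map] at hB
      obtain ⟨k, _, rfl⟩ := hB
      exact hAatom k
    · ext t j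
      rw [key n le_rfl t j (by omega), Matrix.one_apply]
      exact hLast t j
  · rintro ⟨L, hlen, hatom, hprod⟩
    classical
    set M : Matrix (Fin (n + r)) (Fin r) (ZMod s) := Matrix.of fun m j =>
      if h : (m : ℕ) < n then ((L.drop (n - (m : ℕ))).prod) ⟨0, hr⟩ j
      else if (m : ℕ) - n = (j : ℕ) then 1 else 0 with hM
    have key2 : ∀ k, k ≤ n → ∀ (t j : Fin r) (h : k + (t : ℕ) < n + r),
        M ⟨k + (t : ℕ), h⟩ j = ((L.drop (n - k)).prod) t j := by
      intro k hk t j h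
      by_cases hlt : k + (t : ℕ) < n
      · have e1 : M ⟨k + (t : ℕ), h⟩ j
            = ((L.drop (n - (k + (t : ℕ)))).prod) ⟨0, hr⟩ j := by
          simp only [hM, Matrix.of_apply]
          rw [dif_pos hlt]
        rw [e1]
        have h1 : (L.drop (n - (k + (t : ℕ)))).drop (t : ℕ) = L.drop (n - k) := by
          rw [List.drop_drop]
          congr 1
          omega
        have hsplit : (L.drop (n - (k + (t : ℕ)))).take (t : ℕ) ++ L.drop (n - k)
            = L.drop (n - (k + (t : ℕ))) := by
          rw [← h1, List.take_append_drop]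
        have hlen2 : ((L.drop (n - (k + (t : ℕ)))).take (t : ℕ)).length = (t : ℕ) := by
          simp only [List.length_take, List.length_drop, hlen]
          omega
        rw [← hsplit, List.prod_append]
        have := prod_shift R ((L.drop (n - (k + (t : ℕ)))).take (t : ℕ))
          (fun X hX => hatom X (List.drop_subset _ _ (List.take_subset _ _ hX)))
          ((L.drop (n - k)).prod) 0 (by rw [hlen2]; omega) j
        rw [this]
        exact finCongr' (fun i => ((L.drop (n - k)).prod) i j) (by rw [hlen2]; omega) _ _
      · have e1 : M ⟨k + (t : ℕ), h⟩ j
            = if k + (t : ℕ) - n = (j : ℕ) then 1 else 0 := by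
          simp only [hM, Matrix.of_apply]
          rw [dif_neg hlt]
        rw [e1]
        have hlen3 : (L.take (n - k)).length = n - k := by
          simp only [List.length_take, hlen]; omega
        have hts := t.isLt
        have := prod_shift R (L.take (n - k))
          (fun X hX => hatom X (List.take_subset _ _ hX))
          ((L.drop (n - k)).prod) (k + (t : ℕ) - n) (by rw [hlen3]; omega) j
        rw [← List.prod_append, List.take_append_drop, hprod, Matrix.one_apply] at this
        have e2 : ((L.drop (n - k)).prod) t j
            = ((L.drop (n - k)).prod) ⟨k + (t : ℕ) - n + (L.take (n - k)).length,
                by rw [hlen3]; omega⟩ j :=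
          (finCongr' (fun i => ((L.drop (n - k)).prod) i j) (by rw [hlen3]; omega) _ _).symm
        rw [e2, ← this]
        simp [Fin.ext_iff]
    refine ⟨M, ⟨?_, ?_⟩, ?_⟩
    · intro i j
      have := key2 0 (by omega) i j (by omega)
      rw [List.drop_eq_nil_of_le (by omega), List.prod_nil, Matrix.one_apply] at this
      rw [← this]
      exact finCongr' (fun x => M x j) (by omega) _ _
    · intro k hk1 hk2
      have hmlt : k - r < n := by omega
      have hidx : n - (k - r) - 1 < L.length := by rw [hlen]; omega
      have hdrop : L.drop (n - (k - r) - 1)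
          = L[n - (k - r) - 1] :: L.drop (n - (k - r)) := by
        rw [List.drop_eq_getElem_cons hidx,
          show n - (k - r) - 1 + 1 = n - (k - r) from by omega]
      set B := L[n - (k - r) - 1]'hidx with hB
      have hBatom : IsAtomicMat R r s B := hatom B (List.getElem_mem _)
      set G : ℕ → ZMod s := fun d => if hd : d ∈ R ∧ 0 < d ∧ d ≤ r
        then B ⟨r - 1, by omega⟩ ⟨r - d, by have := hd.2.1; have := hd.2.2; omega⟩
        else 0 with hG
      refine ⟨G, fun j => ?_⟩
      have e1 : M ⟨k, hk2⟩ j = ((L.drop (n - (k - r + 1))).prod) ⟨r - 1, by omega⟩ j := by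
        have := key2 (k - r + 1) (by omega) ⟨r - 1, by omega⟩ j
          (show k - r + 1 + (r - 1) < n + r by omega)
        rw [← this]
        exact finCongr' (fun x => M x j) (show k = k - r + 1 + (r - 1) by omega) _ _
      have e1' : n - (k - r + 1) = n - (k - r) - 1 := by omega
      rw [e1, e1', hdrop, List.prod_cons, Matrix.mul_apply]
      set F : ℕ → ZMod s := fun m =>
        if h : (k - r) + m < n + r then M ⟨(k - r) + m, h⟩ j else 0 with hF
      have hprev : ∀ l : Fin r, ((L.drop (n - (k - r))).prod) l j = F (l : ℕ) := by
        intro l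
        rw [← key2 (k - r) (by omega) l j (by omega)]
        simp only [hF]
        rw [dif_pos (by omega)]
      have hrow : ∀ l : Fin r, B ⟨r - 1, by omega⟩ l
          = if r - (l : ℕ) ∈ R then G (r - (l : ℕ)) else 0 := by
        intro l
        have hl := l.isLt
        by_cases hc : r - (l : ℕ) ∈ R
        · rw [if_pos hc]
          simp only [hG]
          rw [dif_pos ⟨hc, by omega, by omega⟩]
          exact (finCongr' (fun x : Fin r => B ⟨r - 1, by omega⟩ x)
            (show r - (r - (l : ℕ)) = (l : ℕ) by omega) _ _).symm
        · rw [if_neg hc]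
          exact (hBatom ⟨r - 1, by omega⟩ l).2 (show r - 1 + 1 = r by omega) hc
      rw [Finset.sum_congr rfl (fun l _ => by rw [hrow l, hprev l])]
      rw [show (∑ l : Fin r, (if r - (l : ℕ) ∈ R then G (r - (l : ℕ)) else 0) * F (l : ℕ))
          = ∑ l ∈ Finset.range r, (if r - l ∈ R then G (r - l) else 0) * F l
        from Fin.sum_univ_eq_sum_range
          (fun l => (if r - l ∈ R then G (r - l) else 0) * F l) r]
      rw [sum_reindex r R hmax hpos G F]
      refine Finset.sum_congr rfl fun d hd => ?_
      have h1 := hmax d hd; have h2 := hpos d hd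
      congr 1
      simp only [hF]
      rw [dif_pos (show k - r + (r - d) < n + r by omega)]
      exact finCongr' (fun x => M x j) (show k - r + (r - d) = k - d by omega) _ _
    · intro i j
      simp only [hM, Matrix.of_apply]
      rw [dif_neg (by omega)]
      by_cases hij : i = j
      · subst hij
        rw [if_pos rfl, if_pos (by omega : n + (i : ℕ) - n = (i : ℕ))]
      · rw [if_neg (fun hcon => hij (Fin.ext (by omega))), if_neg hij]
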